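/- Let A, B, C, D be complex matrices of compatible sizes with A, D square. Set S = A − C D^d B, H = B A^d, K = A^d C, Γ = H K, E = A A^d − K Γ^d H. If A^π C D^d B = 0 and K Γ^d H S A^d = 0, then S^d = (E S E)^d + ∑_{i=0}^{t-1} ((E S E)^d)^{i+2} (S E^π)^{i+1}, where t = ind(E^π S E^π). -/

import Mathlib

open Matrix Finset

attribute [local instance] Classical.propDecidable

noncomputable def drazin {n : Type*} [Fintype n] [DecidableEq n]
    (A : Matrix n n ℂ) : Matrix n n ℂ :=
  if h : ∃ X : Matrix n n ℂ,
      A * X = X * A ∧ X * A * X = X ∧ ∃ k : ℕ, A ^ (k + 1) * X = A ^ k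
  then h.choose else 0

noncomputable def ind {n : Type*} [Fintype n] [DecidableEq n]
    (A : Matrix n n ℂ) : ℕ :=
  sInf {k : ℕ | (A ^ k).rank = (A ^ (k + 1)).rank}

noncomputable def spi {n : Type*} [Fintype n] [DecidableEq n]
    (A : Matrix n n ℂ) : Matrix n n ℂ :=
  1 - A * drazin A

section aux

variable {n : Type*} [Fintype n] [DecidableEq n]

open Polynomial in
lemma exists_drazin (A : Matrix n n ℂ) :
    ∃ X : Matrix n n ℂ,
      A * X = X * A ∧ X * A * X = X ∧ ∃ k : ℕ, A ^ (k + 1) * X = A ^ k := by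
  classical
  set p := A.charpoly with hp
  have hp0 : p ≠ 0 := A.charpoly_monic.ne_zero
  set k := p.rootMultiplicity 0 with hk
  obtain ⟨q, hq⟩ : (X : ℂ[X]) ^ k ∣ p := by
    simpa using Polynomial.pow_rootMultiplicity_dvd p 0
  have hq0 : q.eval 0 ≠ 0 := by
    intro h
    obtain ⟨r, hr⟩ : (X : ℂ[X]) ∣ q :=
      Polynomial.X_dvd_iff.2 (by rwa [Polynomial.coeff_zero_eq_eval_zero])
    have : (X - C (0:ℂ)) ^ (k + 1) ∣ p := by
      simpa using ⟨r, by rw [hq, hr, pow_succ]; ring⟩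
    exact Polynomial.pow_rootMultiplicity_not_dvd hp0 0 this
  have hcop : IsCoprime (X : ℂ[X]) q := by
    refine ⟨-(C (q.eval 0)⁻¹) * (q /ₘ X), C (q.eval 0)⁻¹, ?_⟩
    have hmod : q %ₘ X + X * (q /ₘ X) = q := Polynomial.modByMonic_add_div q X
    have hqm : q %ₘ X = C (q.eval 0) := Polynomial.modByMonic_X q
    have : C (q.eval 0)⁻¹ * C (q.eval 0) = 1 := by
      rw [← C_mul, inv_mul_cancel₀ hq0, C_1]
    calc -(C (q.eval 0)⁻¹) * (q /ₘ X) * X + C (q.eval 0)⁻¹ * q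
        = C (q.eval 0)⁻¹ * (q - X * (q /ₘ X)) := by ring
      _ = C (q.eval 0)⁻¹ * C (q.eval 0) := by rw [← hqm]; congr 1; linear_combination -hmod
      _ = 1 := this
  obtain ⟨u, v, huv⟩ := (hcop.pow_left : IsCoprime ((X:ℂ[X]) ^ (k+1)) q)
  -- apply aeval A
  set U := Polynomial.aeval A u with hU
  have key : U * A ^ (k + 1) + Polynomial.aeval A v * Polynomial.aeval A q = 1 := by
    have := congrArg (Polynomial.aeval A) huv
    simpa [_root_.map_add, _root_.map_mul, _root_.map_pow] using this
  have hqA : Polynomial.aeval A q * A ^ (k + 1) = 0 := by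
    have h1 : (Polynomial.aeval A) (q * X ^ (k+1)) = 0 := by
      have : q * (X:ℂ[X]) ^ (k+1) = X * p := by rw [hq]; ring
      rw [this, _root_.map_mul, A.aeval_self_charpoly, mul_zero]
    simpa [_root_.map_mul, _root_.map_pow] using h1
  have hAU : A * U = U * A := by
    have h1 : Polynomial.aeval A (X * u) = Polynomial.aeval A (u * X) := by rw [mul_comm]
    simpa [_root_.map_mul] using h1
  have hA2 : A ^ (k + 1) = U * A ^ (2 * k + 2) := by
    have h0 := congrArg (fun M => M * A ^ (k+1)) key
    simp only [add_mul, one_mul, mul_assoc] at h0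
    rw [hqA, mul_zero, add_zero, ← pow_add] at h0
    have e : k + 1 + (k + 1) = 2 * k + 2 := by omega
    rw [e] at h0
    exact h0.symm
  have cAU : Commute A U := hAU
  have hnorm : ∀ a b c d : ℕ, (U^a * A^b) * (U^c * A^d) = U^(a+c) * A^(b+d) := by
    intro a b c d
    rw [mul_assoc, ← mul_assoc (A^b), (cAU.pow_pow b c).eq, pow_add, pow_add]
    simp only [mul_assoc]
  have hstep : ∀ j, U * A ^ (2*k+2+j) = A ^ (k+1+j) := by
    intro j; rw [pow_add, ← mul_assoc, ← hA2, ← pow_add]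
  have hred : ∀ a j, U^(a+1) * A^(2*k+2+j) = U^a * A^(k+1+j) := by
    intro a j; rw [pow_succ, mul_assoc, hstep]
  refine ⟨U^2 * A^(2*k+1), ?_, ?_, k+1, ?_⟩
  · calc A * (U^2 * A^(2*k+1)) = (A * U^2) * A^(2*k+1) := by rw [mul_assoc]
      _ = U^2 * (A * A^(2*k+1)) := by rw [(cAU.pow_right 2).eq, mul_assoc]
      _ = U^2 * (A^(2*k+1) * A) := by rw [← pow_succ' A (2*k+1), ← pow_succ A (2*k+1)]
      _ = U^2 * A^(2*k+1) * A := by rw [mul_assoc]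
  · have e1 : (U^2*A^(2*k+1)) * A = U^2 * A^(2*k+2) := by
      rw [mul_assoc, ← pow_succ]
    rw [e1, hnorm]
    have e2 : (2:ℕ)+2 = 3+1 := by norm_num
    have e3 : 2*k+2+(2*k+1) = 2*k+2+(2*k+1) := rfl
    rw [e2, hred 3 (2*k+1)]
    have e4 : k+1+(2*k+1) = 2*k+2+k := by omega
    have e5 : (3:ℕ) = 2+1 := by norm_num
    rw [e4, e5, hred 2 k]
    have e6 : k+1+k = 2*k+1 := by omega
    rw [e6]
  · have e1 : A^(k+1+1) * (U^2 * A^(2*k+1)) = (U^0 * A^(k+2)) * (U^2 * A^(2*k+1)) := by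
      rw [pow_zero, one_mul]
    rw [e1, hnorm]
    have e2 : k+2+(2*k+1) = 2*k+2+(k+1) := by omega
    have e3 : (0:ℕ)+2 = 1+1 := by norm_num
    rw [e2, e3, hred 1 (k+1)]
    have e4 : k+1+(k+1) = 2*k+2+0 := by omega
    rw [e4, pow_one, hstep 0]


lemma drazin_spec (A : Matrix n n ℂ) :
    A * drazin A = drazin A * A ∧ drazin A * A * drazin A = drazin A ∧
      ∃ k : ℕ, A ^ (k + 1) * drazin A = A ^ k := by
  rw [drazin, dif_pos (exists_drazin A)]
  exact (exists_drazin A).choose_spec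

lemma drazin_eq (A Y : Matrix n n ℂ) (h1 : A * Y = Y * A) (h2 : Y * A * Y = Y)
    (h3 : ∃ k : ℕ, A ^ (k + 1) * Y = A ^ k) : drazin A = Y := by
  obtain ⟨e1, e2, kx, e3⟩ := drazin_spec A
  set Z := drazin A with hZdef
  obtain ⟨ky, hky⟩ := h3
  have cAZ : Commute A Z := e1
  have cAY : Commute A Y := h1
  have hZ2 : Z ^ 2 * A = Z := by
    rw [pow_two, mul_assoc, ← e1, ← mul_assoc]; exact e2
  have hY2 : Y ^ 2 * A = Y := by
    rw [pow_two, mul_assoc, ← h1, ← mul_assoc]; exact h2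
  have fZ : ∀ j : ℕ, Z ^ (j + 1) * A ^ j = Z := by
    intro j; induction j with
    | zero => simp
    | succ j ih =>
      calc Z ^ (j+1+1) * A ^ (j+1)
          = Z * (Z ^ (j+1) * (A ^ j * A)) := by
            rw [pow_succ' Z (j+1), pow_succ A j]; simp only [mul_assoc]
        _ = Z * (Z ^ (j+1) * A ^ j * A) := by simp only [mul_assoc]
        _ = Z * (Z * A) := by rw [ih]
        _ = Z := by rw [← mul_assoc, ← pow_two, hZ2]
  have fY : ∀ j : ℕ, Y ^ (j + 1) * A ^ j = Y := by
    intro j; induction j with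
    | zero => simp
    | succ j ih =>
      calc Y ^ (j+1+1) * A ^ (j+1)
          = Y * (Y ^ (j+1) * (A ^ j * A)) := by
            rw [pow_succ' Y (j+1), pow_succ A j]; simp only [mul_assoc]
        _ = Y * (Y ^ (j+1) * A ^ j * A) := by simp only [mul_assoc]
        _ = Y * (Y * A) := by rw [ih]
        _ = Y := by rw [← mul_assoc, ← pow_two, hY2]
  have fZl : ∀ j : ℕ, A ^ j * Z ^ (j+1) = Z := by
    intro j; rw [(cAZ.pow_pow j (j+1)).eq]; exact fZ j
  have fAZ : ∀ r : ℕ, A ^ (kx + r + 1) * Z = A ^ (kx + r) := by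
    intro r
    have e : kx + r + 1 = r + (kx + 1) := by omega
    have e' : kx + r = r + kx := by omega
    rw [e, e', pow_add A r (kx+1), pow_add A r kx, mul_assoc, e3]
  have fAY : ∀ r : ℕ, A ^ (ky + r + 1) * Y = A ^ (ky + r) := by
    intro r
    have e : ky + r + 1 = r + (ky + 1) := by omega
    have e' : ky + r = r + ky := by omega
    rw [e, e', pow_add A r (ky+1), pow_add A r ky, mul_assoc, hky]
  set m := kx + ky with hm
  have hAmY : A ^ (m+1) * Y = A ^ m := by
    have h := fAY kx
    have e1' : ky + kx + 1 = m + 1 := by omega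
    have e2' : ky + kx = m := by omega
    rw [e1', e2'] at h; exact h
  have hAmZ : A ^ (m+1) * Z = A ^ m := by
    have h := fAZ ky
    have e1' : kx + ky + 1 = m + 1 := by omega
    have e2' : kx + ky = m := by omega
    rw [e1', e2'] at h; exact h
  have h4 : A ^ m = Y * A ^ (m+1) := by
    rw [(cAY.symm.pow_right (m+1)).eq, hAmY]
  have hZY : Z = Y * A * Z := by
    calc Z = A ^ m * Z ^ (m+1) := (fZl m).symm
      _ = Y * A ^ (m+1) * Z ^ (m+1) := by rw [← h4]
      _ = Y * A * (A ^ m * Z ^ (m+1)) := by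
          rw [pow_succ' A m]; simp only [mul_assoc]
      _ = Y * A * Z := by rw [fZl m]
  have hYY : Y = Y * A * Z := by
    calc Y = Y ^ (m+1) * A ^ m := (fY m).symm
      _ = Y ^ (m+1) * (A ^ m * (A * Z)) := by
          rw [← mul_assoc (A ^ m) A Z, ← pow_succ A m, hAmZ]
      _ = Y ^ (m+1) * A ^ m * (A * Z) := by simp only [mul_assoc]
      _ = Y * (A * Z) := by rw [fY m]
      _ = Y * A * Z := by rw [mul_assoc]
  rw [hZdef] at hZY ⊢
  rw [hZY, ← hYY]

lemma pow_ind_eq_zero (M : Matrix n n ℂ) (hM : ∃ s : ℕ, M ^ s = 0) :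
    M ^ ind M = 0 := by
  obtain ⟨s, hs⟩ := hM
  have hmem : ind M ∈ {k : ℕ | (M ^ k).rank = (M ^ (k + 1)).rank} := by
    rw [ind]
    apply Nat.sInf_mem
    exact ⟨s, by simp [Set.mem_setOf_eq, pow_succ, hs]⟩
  set t := ind M with ht
  have hrank : (M ^ t).rank = (M ^ (t+1)).rank := hmem
  set p : ℕ → Submodule ℂ (n → ℂ) := fun k => LinearMap.range ((M ^ k).mulVecLin) with hp
  have plt : ∀ k, p (k+1) ≤ p k := by
    intro k
    have : M ^ (k+1) = (M ^ k) * M := pow_succ M k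
    rw [hp]
    simp only [this, Matrix.mulVecLin_mul]
    exact LinearMap.range_comp_le_range _ _
  have pmap : ∀ k, p (k+1) = Submodule.map M.mulVecLin (p k) := by
    intro k
    have : M ^ (k+1) = M * M ^ k := (pow_succ' M k)
    rw [hp]
    simp only [this, Matrix.mulVecLin_mul]
    exact LinearMap.range_comp _ _
  have heq : p (t+1) = p t := by
    apply Submodule.eq_of_le_of_finrank_le (plt t)
    exact le_of_eq hrank
  have hstab : ∀ j, p (t + j) = p t := by
    intro j; induction j with
    | zero => rfl
    | succ j ih => rw [show t + (j+1) = (t+j)+1 from rfl, pmap, ih, ← pmap, heq]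
  have hbot : p t = ⊥ := by
    rw [← hstab s, hp]
    simp only [pow_add, hs, mul_zero, Matrix.mulVecLin_zero, LinearMap.range_zero]
  have hzero : (M ^ t).mulVecLin = 0 := LinearMap.range_eq_bot.mp hbot
  ext i j
  have := congrFun (congrArg DFunLike.coe hzero) (Pi.single j 1)
  have h2 := congrFun this i
  simpa [Matrix.mulVecLin_apply, Matrix.mulVec_single] using h2


lemma drazin_add_nilpotent (Sm W N : Matrix n n ℂ) (hSm : Sm = W + N) (hNW : N * W = 0)
    (t : ℕ) (hNt : N ^ (t + 1) = 0) :
    drazin Sm = ∑ i ∈ range (t + 1), (drazin W) ^ (i + 1) * N ^ i := by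
  obtain ⟨d1, d2, kW, d3⟩ := drazin_spec W
  set D := drazin W with hD
  have hWD2 : W * D ^ 2 = D := by
    rw [pow_two, ← mul_assoc, d1]; exact d2
  have hND : N * D = 0 := by
    rw [← hWD2, ← mul_assoc, hNW, zero_mul]
  have hNjW : ∀ j : ℕ, N ^ (j + 1) * W = 0 := fun j => by
    rw [pow_succ, mul_assoc, hNW, mul_zero]
  have hNjD : ∀ j : ℕ, N ^ (j + 1) * D = 0 := fun j => by
    rw [pow_succ, mul_assoc, hND, mul_zero]
  have hNb : ∀ b : ℕ, t + 1 ≤ b → N ^ b = 0 := by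
    intro b hb
    have e : b = (t + 1) + (b - (t + 1)) := by omega
    rw [e, pow_add, hNt, zero_mul]
  have hWD1 : ∀ j : ℕ, W * D ^ (j + 1 + 1) = D ^ (j + 1) := by
    intro j
    have e : D ^ (j + 1 + 1) = D ^ 2 * D ^ j := by rw [← pow_add]; congr 1; omega
    rw [e, ← mul_assoc, hWD2, ← pow_succ']
  have hWpow : ∀ r : ℕ, W ^ (kW + r + 1) * D = W ^ (kW + r) := by
    intro r
    have e : kW + r + 1 = r + (kW + 1) := by omega
    have e' : kW + r = r + kW := by omega
    rw [e, e', pow_add W r (kW + 1), pow_add W r kW, mul_assoc, d3]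
  have hWDj : ∀ r j : ℕ, W ^ (kW + r + j + 1) * D ^ (j + 1) = W ^ (kW + r) := by
    intro r j; induction j with
    | zero => simpa using hWpow r
    | succ j ih =>
      have e : kW + r + (j + 1) + 1 = kW + (r + j + 1) + 1 := by omega
      calc W ^ (kW + r + (j + 1) + 1) * D ^ (j + 1 + 1)
          = W ^ (kW + (r + j + 1) + 1) * D * D ^ (j + 1) := by
            rw [pow_succ' D (j + 1), ← mul_assoc, e]
        _ = W ^ (kW + (r + j + 1)) * D ^ (j + 1) := by rw [hWpow (r + j + 1)]
        _ = W ^ (kW + r + j + 1) * D ^ (j + 1) := by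
            have e2 : kW + (r + j + 1) = kW + r + j + 1 := by omega
            rw [e2]
        _ = W ^ (kW + r) := by
            have e3 : kW + r + j + 1 = kW + r + j + 1 := rfl
            exact ih
  set Xs : Matrix n n ℂ := ∑ i ∈ range (t + 1), D ^ (i + 1) * N ^ i with hXs
  have hNXs : ∀ b : ℕ, N ^ (b + 1) * Xs = 0 := by
    intro b
    rw [hXs, Finset.mul_sum]
    apply Finset.sum_eq_zero
    intro i _
    rw [pow_succ' D i]
    simp only [← mul_assoc]
    rw [hNjD b, zero_mul, zero_mul]
  have hN1Xs : N * Xs = 0 := by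
    have := hNXs 0; simpa using this
  have hSX : Sm * Xs = W * D + ∑ i ∈ range t, D ^ (i + 1) * N ^ (i + 1) := by
    rw [hSm, add_mul, hN1Xs, add_zero, hXs, Finset.mul_sum,
      Finset.sum_range_succ']
    have hc : ∀ i ∈ range t, W * (D ^ (i + 1 + 1) * N ^ (i + 1)) = D ^ (i + 1) * N ^ (i + 1) := by
      intro i _
      rw [← mul_assoc, hWD1 i]
    rw [Finset.sum_congr rfl hc]
    simp [add_comm]
  have hXS : Xs * Sm = W * D + ∑ i ∈ range t, D ^ (i + 1) * N ^ (i + 1) := by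
    rw [hSm, mul_add, hXs, Finset.sum_mul, Finset.sum_mul, Finset.sum_range_succ']
    have hc : ∀ i ∈ range t, D ^ (i + 1 + 1) * N ^ (i + 1) * W = 0 := by
      intro i _
      rw [mul_assoc, hNjW i, mul_zero]
    rw [Finset.sum_congr rfl hc, Finset.sum_const_zero, zero_add]
    have hc2 : ∀ i ∈ range (t + 1), D ^ (i + 1) * N ^ i * N = D ^ (i + 1) * N ^ (i + 1) := by
      intro i _
      rw [mul_assoc, ← pow_succ]
    rw [Finset.sum_congr rfl hc2, Finset.sum_range_succ, hNt, mul_zero, add_zero]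
    simp [d1]
  have hcomm : Sm * Xs = Xs * Sm := by rw [hSX, hXS]
  have hXSX : Xs * Sm * Xs = Xs := by
    rw [hXS, add_mul]
    have hA' : W * D * Xs = Xs := by
      rw [hXs, Finset.mul_sum]
      apply Finset.sum_congr rfl
      intro i _
      rw [← mul_assoc, mul_assoc W D (D ^ (i + 1)), ← pow_succ' D (i + 1), hWD1 i]
    have hB' : (∑ i ∈ range t, D ^ (i + 1) * N ^ (i + 1)) * Xs = 0 := by
      rw [Finset.sum_mul]
      apply Finset.sum_eq_zero
      intro i _
      rw [mul_assoc, hNXs i, mul_zero]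
    rw [hA', hB', add_zero]
  have hbin : ∀ M : ℕ, Sm ^ M = ∑ b ∈ range (M + 1), W ^ (M - b) * N ^ b := by
    intro M; induction M with
    | zero => simp
    | succ M ih =>
      rw [pow_succ, ih, hSm, mul_add, Finset.sum_mul, Finset.sum_mul]
      have hfirst : ∑ b ∈ range (M + 1), W ^ (M - b) * N ^ b * W = W ^ (M + 1) := by
        rw [Finset.sum_range_succ']
        have hz : ∀ i ∈ range M, W ^ (M - (i + 1)) * N ^ (i + 1) * W = 0 := by
          intro i _; rw [mul_assoc, hNjW i, mul_zero]
        rw [Finset.sum_congr rfl hz, Finset.sum_const_zero, zero_add]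
        simp [pow_succ]
      rw [hfirst]
      have hsec : ∀ b ∈ range (M + 1), W ^ (M - b) * N ^ b * N = W ^ (M + 1 - (b + 1)) * N ^ (b + 1) := by
        intro b _; rw [Nat.succ_sub_succ, mul_assoc, ← pow_succ]
      rw [Finset.sum_congr rfl hsec,
        Finset.sum_range_succ' (fun b => W ^ (M + 1 - b) * N ^ b) (M + 1)]
      simp [add_comm]
  have hpow3 : Sm ^ (kW + t + 1) * Xs = Sm ^ (kW + t) := by
    rw [hbin (kW + t + 1), Finset.sum_mul, Finset.sum_range_succ']
    have hz : ∀ b ∈ range (kW + t + 1), W ^ (kW + t + 1 - (b + 1)) * N ^ (b + 1) * Xs = 0 := by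
      intro b _; rw [mul_assoc, hNXs b, mul_zero]
    rw [Finset.sum_congr rfl hz, Finset.sum_const_zero, zero_add,
      Nat.sub_zero, pow_zero, mul_one, hXs, Finset.mul_sum]
    have hterm : ∀ j ∈ range (t + 1),
        W ^ (kW + t + 1) * (D ^ (j + 1) * N ^ j) = W ^ (kW + t - j) * N ^ j := by
      intro j hj
      have hjt : j ≤ t := Nat.lt_succ_iff.mp (Finset.mem_range.mp hj)
      have e : kW + t + 1 = kW + (t - j) + j + 1 := by omega
      have e2 : kW + t - j = kW + (t - j) := by omega
      rw [← mul_assoc, e, hWDj (t - j) j, e2]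
    rw [Finset.sum_congr rfl hterm, hbin (kW + t)]
    apply Finset.sum_subset
    · intro x hx
      exact Finset.mem_range.2 (by have := Finset.mem_range.1 hx; omega)
    · intro x hx hnx
      have hxt : t + 1 ≤ x := by
        have := Finset.mem_range.1 hx
        by_contra hcon
        exact hnx (Finset.mem_range.2 (by omega))
      rw [hNb x hxt, mul_zero]
  exact drazin_eq Sm Xs hcomm hXSX ⟨kW + t, hpow3⟩

end aux

theorem stmt10 {n m : ℕ} (A : Matrix (Fin n) (Fin n) ℂ) (D : Matrix (Fin m) (Fin m) ℂ)
    (C : Matrix (Fin n) (Fin m) ℂ) (B : Matrix (Fin m) (Fin n) ℂ)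
    (H : Matrix (Fin m) (Fin n) ℂ) (hH : H = B * drazin A)
    (K : Matrix (Fin n) (Fin m) ℂ) (hK : K = drazin A * C)
    (G : Matrix (Fin m) (Fin m) ℂ) (hG : G = H * K)
    (S : Matrix (Fin n) (Fin n) ℂ) (hS : S = A - C * drazin D * B)
    (E : Matrix (Fin n) (Fin n) ℂ) (hE : E = A * drazin A - K * drazin G * H)
    (h1 : spi A * (C * drazin D * B) = 0)
    (h2 : K * drazin G * H * S * drazin A = 0) :
    drazin S = drazin (E * S * E) +
      ∑ i ∈ range (ind ((1 - E) * S * (1 - E))),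
        (drazin (E * S * E)) ^ (i + 2) * (S * (1 - E)) ^ (i + 1) := by
  obtain ⟨a1, a2, kA, a3⟩ := drazin_spec A
  obtain ⟨g1, g2, -⟩ := drazin_spec G
  set Ad := drazin A with hAd
  set Gd := drazin G with hGd
  set Dd := drazin D with hDd
  set F := K * Gd * H with hF
  set Pp : Matrix (Fin n) (Fin n) ℂ := 1 - A * Ad with hPp
  have h1' : Pp * (C * Dd * B) = 0 := h1
  -- basic identities
  have s1 : A * Ad * Ad = Ad := by rw [a1]; exact a2
  have s2 : A * Ad * (A * Ad) = A * Ad := by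
    rw [Matrix.mul_assoc A Ad (A * Ad), ← Matrix.mul_assoc Ad A Ad, a2]
  have s3 : A * Ad * K = K := by rw [hK, ← Matrix.mul_assoc, s1]
  have s4 : H * (A * Ad) = H := by
    rw [hH, Matrix.mul_assoc, ← Matrix.mul_assoc Ad A Ad, a2]
  have s5 : F * F = F := by
    calc F * F = K * Gd * (H * K) * Gd * H := by rw [hF]; simp only [Matrix.mul_assoc]
      _ = K * Gd * G * Gd * H := by rw [← hG]
      _ = K * (Gd * G * Gd) * H := by simp only [Matrix.mul_assoc]
      _ = F := by rw [g2, hF]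
  have s6 : A * Ad * F = F := by
    rw [hF, ← Matrix.mul_assoc, ← Matrix.mul_assoc, s3]
  have s7 : F * (A * Ad) = F := by
    rw [hF, Matrix.mul_assoc, s4]
  have s8 : Pp * F = 0 := by rw [hPp, sub_mul, one_mul, s6, sub_self]
  have s9 : F * Pp = 0 := by rw [hPp, mul_sub, mul_one, s7, sub_self]
  have s10 : Pp * (A * Ad) = 0 := by rw [hPp, sub_mul, one_mul, s2, sub_self]
  have s12 : E * E = E := by
    rw [hE, sub_mul, mul_sub, mul_sub, s2, s6, s7, s5]
    abel
  have s13 : Pp * E = 0 := by rw [hE, mul_sub, s10, s8, sub_self]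
  have s14a : Pp * A = A * Pp := by
    rw [hPp, sub_mul, mul_sub, one_mul, mul_one, Matrix.mul_assoc, ← a1, ← Matrix.mul_assoc]
  have s14 : Pp * S = A * Pp := by
    rw [hS, mul_sub, h1', sub_zero, s14a]
  have s15 : F * S * Ad = 0 := h2
  have s15X : ∀ X : Matrix (Fin n) (Fin n) ℂ, F * (S * (Ad * X)) = 0 := by
    intro X
    have h := congrArg (fun M => M * X) s15
    simpa [Matrix.mul_assoc] using h
  have s16 : F * S * (A * Ad) = 0 := by
    rw [a1, ← Matrix.mul_assoc, s15, zero_mul]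
  have s17 : F * S * F = 0 := by
    have e : F * S * F = F * (S * (Ad * (C * (Gd * H)))) := by
      rw [hF, hK]; simp only [Matrix.mul_assoc]
    rw [e, s15X (C * (Gd * H))]
  have s18 : Pp * S * E = 0 := by rw [s14, Matrix.mul_assoc, s13, mul_zero]
  have s19 : F * S * E = 0 := by rw [hE, mul_sub, s16, s17, sub_self]
  have hsplit : (1 : Matrix (Fin n) (Fin n) ℂ) - E = Pp + F := by
    rw [hE, hPp]; abel
  have s20 : (1 - E) * S * E = 0 := by
    rw [hsplit, add_mul, add_mul, s18, s19, add_zero]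
  have s21 : S * E = E * S * E := by
    rw [sub_mul, one_mul, sub_mul] at s20
    exact sub_eq_zero.mp s20
  have s23 : Pp * Pp = Pp := by
    rw [hPp, mul_sub, mul_one, sub_mul, one_mul, s2, sub_self, sub_zero]
  have s24 : F * S * Pp = F * S := by
    rw [hPp, mul_sub, mul_one, s16, sub_zero]
  set Mm := (1 - E) * S * (1 - E) with hMm
  have hM : Mm = A * Pp + F * S := by
    have expand : Mm = Pp * S * Pp + Pp * S * F + (F * S * Pp + F * S * F) := by
      rw [hMm, hsplit]; noncomm_ring
    rw [expand, s17, s24, add_zero, s14, Matrix.mul_assoc A Pp Pp, s23,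
      Matrix.mul_assoc A Pp F, s8, mul_zero, add_zero]
  -- nilpotency
  have hXr : ∀ r : ℕ, (A * Pp) ^ (r + 1) = A ^ (r + 1) * Pp := by
    intro r; induction r with
    | zero => simp
    | succ r ih =>
      calc (A * Pp) ^ (r + 1 + 1) = (A * Pp) ^ (r + 1) * (A * Pp) := pow_succ _ _
        _ = A ^ (r + 1) * Pp * (A * Pp) := by rw [ih]
        _ = A ^ (r + 1) * ((Pp * A) * Pp) := by simp only [Matrix.mul_assoc]
        _ = A ^ (r + 1) * ((A * Pp) * Pp) := by rw [s14a]
        _ = A ^ (r + 1) * (A * (Pp * Pp)) := by simp only [Matrix.mul_assoc]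
        _ = A ^ (r + 1) * (A * Pp) := by rw [s23]
        _ = (A ^ (r + 1) * A) * Pp := by simp only [Matrix.mul_assoc]
        _ = A ^ (r + 1 + 1) * Pp := by rw [← pow_succ]
  have s26 : A ^ kA * Pp = 0 := by
    rw [hPp, mul_sub, mul_one, ← Matrix.mul_assoc, ← pow_succ, a3, sub_self]
  have s27 : (A * Pp) ^ (kA + 1) = 0 := by
    rw [hXr kA, pow_succ', Matrix.mul_assoc, s26, mul_zero]
  have s28 : (A * Pp) * (F * S) = 0 := by
    rw [Matrix.mul_assoc, ← Matrix.mul_assoc Pp F S, s8, zero_mul, mul_zero]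
  have s29 : (F * S) * (F * S) = 0 := by
    rw [← Matrix.mul_assoc, s17, zero_mul]
  have hX1Y : ∀ r : ℕ, (A * Pp) ^ (r + 1) * (F * S) = 0 := by
    intro r; rw [pow_succ, Matrix.mul_assoc, s28, mul_zero]
  have hYXY : ∀ r : ℕ, (F * S) * (A * Pp) ^ r * (F * S) = 0 := by
    intro r
    cases r with
    | zero => simpa using s29
    | succ r =>
      calc F * S * (A * Pp) ^ (r + 1) * (F * S)
          = F * S * ((A * Pp) ^ r * ((A * Pp) * (F * S))) := by
            rw [pow_succ]; simp only [Matrix.mul_assoc]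
        _ = 0 := by rw [s28, mul_zero, mul_zero]
  have hMpow : ∀ r : ℕ, (A * Pp + F * S) ^ (r + 1)
      = (A * Pp) ^ (r + 1) + (F * S) * (A * Pp) ^ r := by
    intro r; induction r with
    | zero => simp
    | succ r ih =>
      have expand : (A * Pp + F * S) ^ (r + 1 + 1)
          = ((A * Pp) ^ (r + 1) + (F * S) * (A * Pp) ^ r) * (A * Pp + F * S) := by
        rw [pow_succ, ih]
      rw [expand, add_mul, mul_add, mul_add]
      rw [hX1Y r, ← pow_succ, add_zero]
      rw [Matrix.mul_assoc ((F*S)) ((A*Pp)^r) (A*Pp), ← pow_succ, hYXY r]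
      abel
  have hMnil : Mm ^ (kA + 2) = 0 := by
    rw [hM, hMpow (kA + 1), s27]
    have e : (A * Pp) ^ (kA + 1 + 1) = 0 := by
      rw [pow_succ, s27, zero_mul]
    rw [e, mul_zero, add_zero]
  set t := ind Mm with hti
  have hMt : Mm ^ t = 0 := pow_ind_eq_zero Mm ⟨kA + 2, hMnil⟩
  have s33 : (1 - E) * (1 - E) = 1 - E := by
    rw [mul_sub, mul_one, sub_mul, one_mul, s12]
    abel
  have s34 : Mm * (1 - E) = Mm := by
    rw [hMm, Matrix.mul_assoc, s33]
  have hMjP : ∀ j : ℕ, Mm ^ (j + 1) * (1 - E) = Mm ^ (j + 1) := by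
    intro j; rw [pow_succ, Matrix.mul_assoc, s34]
  have hSPj : ∀ j : ℕ, (S * (1 - E)) ^ (j + 1) = S * Mm ^ j * (1 - E) := by
    intro j; induction j with
    | zero => simp
    | succ j ih =>
      calc (S * (1 - E)) ^ (j + 1 + 1) = (S * Mm ^ j * (1 - E)) * (S * (1 - E)) := by
            rw [pow_succ, ih]
        _ = S * Mm ^ j * ((1 - E) * S * (1 - E)) := by simp only [Matrix.mul_assoc]
        _ = S * Mm ^ j * Mm := by rw [← hMm]
        _ = S * Mm ^ (j + 1) := by rw [Matrix.mul_assoc, ← pow_succ]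
        _ = S * (Mm ^ (j + 1) * (1 - E)) := by rw [hMjP]
        _ = S * Mm ^ (j + 1) * (1 - E) := by simp only [Matrix.mul_assoc]
  have hNt : (S * (1 - E)) ^ (t + 1) = 0 := by
    rw [hSPj t, hMt, mul_zero, zero_mul]
  have hPE : (1 - E) * E = 0 := by rw [sub_mul, one_mul, s12, sub_self]
  have hNW : (S * (1 - E)) * (E * S * E) = 0 := by
    calc (S * (1 - E)) * (E * S * E) = S * ((1 - E) * E) * (S * E) := by
          simp only [Matrix.mul_assoc]
      _ = 0 := by rw [hPE, mul_zero, zero_mul]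
  have hWN : S = E * S * E + S * (1 - E) := by
    have h' : S = S * E + S * (1 - E) := by
      have e : E + (1 - E) = 1 := by abel
      rw [← mul_add, e, mul_one]
    rw [s21] at h'
    exact h'
  have main := drazin_add_nilpotent S (E * S * E) (S * (1 - E)) hWN hNW t hNt
  rw [main, Finset.sum_range_succ']
  simp only [zero_add, pow_one, pow_zero, mul_one]
  rw [add_comm]
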